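/- arXiv:1509.01886 — 5 statements merged into one kernel-verified Lean document; each statement's English description precedes it below -/
import Mathlib

section
/- Let U be a finite set, ρ : U → ℝ a nonnegative function, g : ℝ → ℝ a nondecreasing function, d ∈ ℝ, N ∈ ℕ, and P ≥ 0. Let 𝓕 = {S ⊆ U : |S| ≤ N and Σ_{k∈S} ρ(k) ≤ P}, and define f(S) = g(Σ_{k∈S} ρ(k)) − d·|S|. Then there exists S* ∈ 𝓕 minimizing f over 𝓕 such that ρ(k₁) ≤ ρ(k₀) for every k₁ ∈ S* and every k₀ ∈ U \ S*; i.e., some optimal served set consists of elements with the smallest values of ρ. -/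
/-- For a finite set `U`, nonnegative `ρ`, nondecreasing `g`, reward `d`, channel
count `N` and power budget `P ≥ 0`, there is a minimizer `S*` of
`f(S) = g(Σ_{k∈S} ρ k) − d·|S|` over `𝓕 = {S : |S| ≤ N, Σ_{k∈S} ρ k ≤ P}` such that
every element of `S*` has `ρ`-value at most that of every element outside `S*`. -/
theorem stmt_3 {U : Type*} [Fintype U] [DecidableEq U]
    (ρ : U → ℝ) (hρ : ∀ k, 0 ≤ ρ k) (g : ℝ → ℝ) (hg : Monotone g)
    (d : ℝ) (N : ℕ) (P : ℝ) (hP : 0 ≤ P) :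
    ∃ S : Finset U,
      (S.card ≤ N ∧ ∑ k ∈ S, ρ k ≤ P) ∧
      (∀ T : Finset U, T.card ≤ N → ∑ k ∈ T, ρ k ≤ P →
        g (∑ k ∈ S, ρ k) - d * S.card ≤ g (∑ k ∈ T, ρ k) - d * T.card) ∧
      (∀ k₁ ∈ S, ∀ k₀, k₀ ∉ S → ρ k₁ ≤ ρ k₀) := by
  classical
  set f : Finset U → ℝ := fun S => g (∑ k ∈ S, ρ k) - d * S.card with hf
  set A : Finset (Finset U) :=
    Finset.univ.filter (fun S => S.card ≤ N ∧ ∑ k ∈ S, ρ k ≤ P) with hA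
  have hmemA : ∀ S : Finset U, S ∈ A ↔ (S.card ≤ N ∧ ∑ k ∈ S, ρ k ≤ P) := by
    intro S; simp [hA]
  have hAne : A.Nonempty := ⟨∅, by simp [hA, hP]⟩
  obtain ⟨S₀, hS₀A, hS₀min⟩ := A.exists_min_image f hAne
  set B : Finset (Finset U) := A.filter (fun S => f S = f S₀) with hB
  have hBne : B.Nonempty := ⟨S₀, by simp [hB, hS₀A]⟩
  obtain ⟨S, hSB, hSmin⟩ := B.exists_min_image (fun S => ∑ k ∈ S, ρ k) hBne
  have hSA : S ∈ A := (Finset.mem_filter.mp hSB).1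
  have hSf : f S = f S₀ := (Finset.mem_filter.mp hSB).2
  have hfeas := (hmemA S).mp hSA
  refine ⟨S, hfeas, ?_, ?_⟩
  · intro T hT1 hT2
    have hTA : T ∈ A := (hmemA T).mpr ⟨hT1, hT2⟩
    have := hS₀min T hTA
    calc f S = f S₀ := hSf
      _ ≤ f T := this
  · intro k₁ hk₁ k₀ hk₀
    by_contra h
    push_neg at h
    set S' : Finset U := insert k₀ (S.erase k₁) with hS'
    have hk₀e : k₀ ∉ S.erase k₁ := fun hc => hk₀ (Finset.mem_of_mem_erase hc)
    have hcard : S'.card = S.card := by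
      have hpos : 0 < S.card := Finset.card_pos.mpr ⟨k₁, hk₁⟩
      rw [hS', Finset.card_insert_of_notMem hk₀e, Finset.card_erase_of_mem hk₁]
      omega
    have hsum' : ∑ k ∈ S', ρ k = ∑ k ∈ S, ρ k - ρ k₁ + ρ k₀ := by
      rw [hS', Finset.sum_insert hk₀e, Finset.sum_erase_eq_sub hk₁]; ring
    have hlt : ∑ k ∈ S', ρ k < ∑ k ∈ S, ρ k := by
      rw [hsum']; linarith
    have hS'A : S' ∈ A := (hmemA S').mpr ⟨by rw [hcard]; exact hfeas.1,
      le_trans hlt.le hfeas.2⟩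
    have hfle : f S' ≤ f S := by
      simp only [hf, hcard]
      have := hg hlt.le
      linarith
    have hfeq : f S' = f S₀ := le_antisymm (hSf ▸ hfle) (hS₀min S' hS'A)
    have hS'B : S' ∈ B := Finset.mem_filter.mpr ⟨hS'A, hfeq⟩
    have := hSmin S' hS'B
    linarith
end

section
/- Let n ∈ ℕ, let ρ₁ ≤ ρ₂ ≤ … ≤ ρₙ be nonnegative reals sorted nondecreasingly, and let c > 0, d ≥ 0, P ≥ 0, N ∈ ℕ. Define 𝓕 = {S ⊆ {1,…,n} : |S| ≤ N and Σ_{k∈S} ρ_k ≤ P} and f(S) = c·Σ_{k∈S} ρ_k − d·|S|. Let m* be the largest index i ∈ {1,…,min(N,n)} such that Σ_{k=1}^{i} ρ_k ≤ P and c·ρ_i ≤ d, with m* = 0 if no such i exists. Then the prefix {1,…,m*} belongs to 𝓕 and f({1,…,m*}) ≤ f(S) for all S ∈ 𝓕. -/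
/-- Among subsets of `{0,…,n-1}` of a given cardinality, the prefix has minimal ρ-sum. -/
lemma prefix_sum_le_aux {n : ℕ} (ρ : ℕ → ℝ)
    (hsort : ∀ i j, i ≤ j → j < n → ρ i ≤ ρ j)
    (S : Finset ℕ) (hS : S ⊆ Finset.range n) :
    ∑ k ∈ Finset.range S.card, ρ k ≤ ∑ k ∈ S, ρ k := by
  set s := S.card with hs
  let e : Fin s ↪o ℕ := S.orderEmbOfFin rfl
  have hmem : ∀ i : Fin s, e i ∈ S := fun i => S.orderEmbOfFin_mem rfl i
  have hge : ∀ k, ∀ i : Fin s, (i : ℕ) = k → k ≤ e i := by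
    intro k
    induction k with
    | zero => intro i _; exact Nat.zero_le _
    | succ k ih =>
      intro i hi
      have hk : k < s := by omega
      have hlt : (⟨k, hk⟩ : Fin s) < i := by
        simp [Fin.lt_def, hi]
      have h1 := e.strictMono hlt
      have h2 := ih ⟨k, hk⟩ rfl
      omega
  have hsum : ∑ k ∈ S, ρ k = ∑ i : Fin s, ρ (e i) := by
    symm
    apply Finset.sum_bij (fun (i : Fin s) _ => e i)
    · intro i _; exact hmem i
    · intro a _ b _ hab; exact e.injective hab
    · intro b hb
      have : b ∈ Set.range e := by
        rw [Finset.range_orderEmbOfFin]; exact hb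
      obtain ⟨i, hi⟩ := this
      exact ⟨i, Finset.mem_univ i, hi⟩
    · intro i _; rfl
  rw [hsum, Finset.sum_range fun i => ρ i]
  apply Finset.sum_le_sum
  intro i _
  have h1 : (i : ℕ) ≤ e i := hge i i rfl
  have h2 : e i < n := Finset.mem_range.mp (hS (hmem i))
  exact hsort i (e i) h1 h2

/-- Corollary 2 (abstract form). With `ρ 0 ≤ ρ 1 ≤ … ≤ ρ (n-1)` nonnegative and sorted
(1-based `ρᵢ` corresponds to `ρ (i-1)`), `c > 0`, `d ≥ 0`, `P ≥ 0`, `N` channels: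
if `m` is the largest `i ∈ {1,…,min N n}` with `Σ_{k<i} ρ k ≤ P` and `c·ρ (i-1) ≤ d`
(`m = 0` if there is none), then the prefix `{0,…,m-1}` is feasible and minimizes
`f(S) = c·Σ_{k∈S} ρ k − d·|S|` over all feasible `S ⊆ {0,…,n-1}`. -/
theorem stmt_4 (n : ℕ) (ρ : ℕ → ℝ) (hρ0 : ∀ k, 0 ≤ ρ k)
    (hsort : ∀ i j, i ≤ j → j < n → ρ i ≤ ρ j)
    (c d P : ℝ) (hc : 0 < c) (hd : 0 ≤ d) (hP : 0 ≤ P) (N : ℕ) (m : ℕ)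
    (hm : (m = 0 ∧ ∀ i, 1 ≤ i → i ≤ min N n →
            ¬((∑ k ∈ Finset.range i, ρ k) ≤ P ∧ c * ρ (i - 1) ≤ d)) ∨
          (1 ≤ m ∧ m ≤ min N n ∧ (∑ k ∈ Finset.range m, ρ k) ≤ P ∧ c * ρ (m - 1) ≤ d ∧
            ∀ i, 1 ≤ i → i ≤ min N n → (∑ k ∈ Finset.range i, ρ k) ≤ P →
              c * ρ (i - 1) ≤ d → i ≤ m)) :
    ((Finset.range m).card ≤ N ∧ (∑ k ∈ Finset.range m, ρ k) ≤ P) ∧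
    ∀ S : Finset ℕ, S ⊆ Finset.range n → S.card ≤ N → (∑ k ∈ S, ρ k) ≤ P →
      c * (∑ k ∈ Finset.range m, ρ k) - d * (Finset.range m).card ≤
        c * (∑ k ∈ S, ρ k) - d * S.card := by
  set A : ℕ → ℝ := fun i => ∑ k ∈ Finset.range i, ρ k with hA
  have Amono : ∀ a b, a ≤ b → A a ≤ A b := by
    intro a b hab
    apply Finset.sum_le_sum_of_subset_of_nonneg (Finset.range_subset_range.mpr hab)
    intro k _ _; exact hρ0 k
  have Asplit : ∀ a b, a ≤ b → A b = A a + ∑ k ∈ Finset.Ico a b, ρ k := by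
    intro a b hab
    rw [hA]
    simp only [Finset.range_eq_Ico]
    rw [← Finset.sum_Ico_consecutive ρ (Nat.zero_le a) hab]
  -- the key comparison between prefixes
  have main : ∀ s, s ≤ N → s ≤ n → A s ≤ P →
      c * A m - d * m ≤ c * A s - d * s := by
    intro s hsN hsn hsP
    rcases hm with ⟨hm0, hnone⟩ | ⟨hm1, hm2, hAm, hcm, hmax⟩
    · -- m = 0 : every term in the prefix has c·ρ i ≥ d
      subst hm0
      have hterm : ∀ i ∈ Finset.Ico 0 s, d ≤ c * ρ i := by
        intro i hi
        have his : i < s := (Finset.mem_Ico.mp hi).2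
        have h1 : 1 ≤ i + 1 := by omega
        have h2 : i + 1 ≤ min N n := by omega
        have h3 : A (i + 1) ≤ P := le_trans (Amono _ _ (by omega)) hsP
        have := hnone (i + 1) h1 h2
        push_neg at this
        have := this h3
        simp only [Nat.add_sub_cancel] at this
        linarith
      have hsum : (s : ℝ) * d ≤ c * ∑ k ∈ Finset.Ico 0 s, ρ k := by
        rw [Finset.mul_sum]
        calc (s : ℝ) * d = ∑ _k ∈ Finset.Ico 0 s, d := by
              simp [mul_comm]
          _ ≤ ∑ k ∈ Finset.Ico 0 s, c * ρ k := Finset.sum_le_sum hterm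
      have hA0 : A 0 = 0 := by simp [hA]
      have hAs : A s = ∑ k ∈ Finset.Ico 0 s, ρ k := by
        rw [Asplit 0 s (Nat.zero_le s), hA0]; ring
      rw [hA0, hAs]
      push_cast
      nlinarith
    · rcases le_or_gt s m with hsm | hms
      · -- s ≤ m : every term in Ico s m has c·ρ i ≤ d
        have hterm : ∀ i ∈ Finset.Ico s m, c * ρ i ≤ d := by
          intro i hi
          have him : i < m := (Finset.mem_Ico.mp hi).2
          have : ρ i ≤ ρ (m - 1) := hsort i (m - 1) (by omega) (by omega)
          nlinarith
        have hsum : c * ∑ k ∈ Finset.Ico s m, ρ k ≤ ((m : ℝ) - s) * d := by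
          rw [Finset.mul_sum]
          calc ∑ k ∈ Finset.Ico s m, c * ρ k ≤ ∑ _k ∈ Finset.Ico s m, d :=
                Finset.sum_le_sum hterm
            _ = ((m : ℝ) - s) * d := by
                rw [Finset.sum_const, Nat.card_Ico, nsmul_eq_mul, Nat.cast_sub hsm]
        have := Asplit s m hsm
        push_cast
        nlinarith
      · -- m < s : every term in Ico m s has c·ρ i ≥ d
        have hterm : ∀ i ∈ Finset.Ico m s, d ≤ c * ρ i := by
          intro i hi
          obtain ⟨hmi, his⟩ := Finset.mem_Ico.mp hi
          have h1 : 1 ≤ i + 1 := by omega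
          have h2 : i + 1 ≤ min N n := by omega
          have h3 : A (i + 1) ≤ P := le_trans (Amono _ _ (by omega)) hsP
          by_contra hcon
          push_neg at hcon
          have := hmax (i + 1) h1 h2 h3 (by
            simpa using le_of_lt hcon)
          omega
        have hsum : ((s : ℝ) - m) * d ≤ c * ∑ k ∈ Finset.Ico m s, ρ k := by
          rw [Finset.mul_sum]
          calc ((s : ℝ) - m) * d = ∑ _k ∈ Finset.Ico m s, d := by
                rw [Finset.sum_const, Nat.card_Ico, nsmul_eq_mul, Nat.cast_sub (le_of_lt hms)]
            _ ≤ ∑ k ∈ Finset.Ico m s, c * ρ k := Finset.sum_le_sum hterm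
        have := Asplit m s (le_of_lt hms)
        push_cast
        nlinarith
  constructor
  · rcases hm with ⟨hm0, _⟩ | ⟨_, hm2, hAm, _, _⟩
    · subst hm0; simp [hA] at *; exact hP
    · exact ⟨by simpa using le_trans hm2 (min_le_left N n), hAm⟩
  · intro S hSn hSN hSP
    have hsn : S.card ≤ n := by
      have := Finset.card_le_card hSn
      simpa using this
    have hpre : A S.card ≤ ∑ k ∈ S, ρ k := prefix_sum_le_aux ρ hsort S hSn
    have hAsP : A S.card ≤ P := le_trans hpre hSP
    have h1 := main S.card hSN hsn hAsP
    have h2 : c * A S.card - d * S.card ≤ c * (∑ k ∈ S, ρ k) - d * S.card := by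
      nlinarith
    simp only [Finset.card_range]
    linarith
end

section
/- Let τ > 0, ε > 0 and reals a, g with 0 < a ≤ g. Suppose 0 ≤ ρ ≤ a·ε/g. Then for every x ∈ {0} ∪ [ε, ∞) and every y ≥ 0 with x + y ≥ ρ, we have g·ρ·τ ≤ a·x·τ + g·y·τ. In particular, the grid-only choice (x, y) = (0, ρ) minimizes the cost a·x·τ + g·y·τ over all feasible (x, y). -/
/-- Lemma 2, first case: if `0 < a ≤ g` and `0 ≤ ρ ≤ a·ε/g`, then for every harvested
power `x ∈ {0} ∪ [ε, ∞)` and grid power `y ≥ 0` with `x + y ≥ ρ`, the grid-only cost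
`g·ρ·τ` is minimal: `g·ρ·τ ≤ a·x·τ + g·y·τ`. -/
theorem stmt_7 (τ ε a g ρ : ℝ) (hτ : 0 < τ) (hε : 0 < ε) (ha : 0 < a) (hag : a ≤ g)
    (hρ0 : 0 ≤ ρ) (hρ : ρ ≤ a * ε / g) :
    ∀ x y : ℝ, x ∈ ({0} : Set ℝ) ∪ Set.Ici ε → 0 ≤ y → ρ ≤ x + y →
      g * ρ * τ ≤ a * x * τ + g * y * τ := by
  intro x y hx hy hxy
  have hg : 0 < g := lt_of_lt_of_le ha hag
  rcases hx with hx | hx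
  · simp only [Set.mem_singleton_iff] at hx
    subst hx
    have h1 : ρ ≤ y := by linarith
    nlinarith [mul_le_mul_of_nonneg_left (mul_le_mul_of_nonneg_right h1 hτ.le) hg.le]
  · have hεx : ε ≤ x := hx
    have hgρ : g * ρ ≤ a * ε := by
      rw [le_div_iff₀ hg] at hρ; nlinarith
    have key : g * ρ ≤ a * x + g * y := by nlinarith
    nlinarith [mul_le_mul_of_nonneg_right key hτ.le]
end

section
/- Let τ > 0, ε > 0 and reals a, g with 0 < a ≤ g. Suppose a·ε/g < ρ ≤ ε. Then (x, y) = (ε, 0) is feasible (since ε ≥ ρ), and for every x ∈ {0} ∪ [ε, ∞) and every y ≥ 0 with x + y ≥ ρ, we have a·ε·τ ≤ a·x·τ + g·y·τ. In particular, consuming exactly the minimum allowed harvested power ε and no grid power minimizes the cost. -/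
/-- Lemma 2, second case: if `0 < a ≤ g` and `a·ε/g < ρ ≤ ε`, then `(x, y) = (ε, 0)` is
feasible (`ρ ≤ ε`), and for every harvested power `x ∈ {0} ∪ [ε, ∞)` and grid power
`y ≥ 0` with `x + y ≥ ρ`, we have `a·ε·τ ≤ a·x·τ + g·y·τ`. -/
theorem stmt_8 (τ ε a g ρ : ℝ) (hτ : 0 < τ) (hε : 0 < ε) (ha : 0 < a) (hag : a ≤ g)
    (hρ1 : a * ε / g < ρ) (hρ2 : ρ ≤ ε) :
    ρ ≤ ε + 0 ∧
    ∀ x y : ℝ, x ∈ ({0} : Set ℝ) ∪ Set.Ici ε → 0 ≤ y → ρ ≤ x + y →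
      a * ε * τ ≤ a * x * τ + g * y * τ := by
  have hg : 0 < g := lt_of_lt_of_le ha hag
  refine ⟨by linarith, fun x y hx hy hxy => ?_⟩
  rcases hx with hx | hx
  · simp only [Set.mem_singleton_iff] at hx
    subst hx
    have h1 : a * ε / g < y := by linarith [hxy]
    have h2 : a * ε < g * y := by
      have := (div_lt_iff₀ hg).mp h1
      nlinarith
    nlinarith
  · have hx' : ε ≤ x := hx
    nlinarith [mul_nonneg (mul_nonneg hg.le hy) hτ.le,
      mul_le_mul_of_nonneg_right (mul_le_mul_of_nonneg_left hx' ha.le) hτ.le]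
end

section
/- Let θ ≥ 0, E_max ≥ 0 and D > 0 be reals. Let B, e, d : ℕ → ℝ and E : ℕ → ℝ be sequences satisfying: B(0) = 0; for every t, 0 ≤ E(t) ≤ E_max; e(t) = E(t) if B(t) ≤ θ and e(t) = 0 if B(t) > θ; 0 ≤ d(t) ≤ D; d(t) = 0 whenever B(t) < D; and B(t+1) = B(t) − d(t) + e(t). Then for every t ∈ ℕ, 0 ≤ B(t) ≤ θ + E_max. -/
/-- Proposition 3 (deterministic form): under the harvesting rule `e t = E t` if
`B t ≤ θ` and `e t = 0` otherwise, with battery output `0 ≤ d t ≤ D` vanishing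
whenever `B t < D`, and dynamics `B (t+1) = B t − d t + e t` with `B 0 = 0`, the
battery level stays within `[0, θ + E_max]`. -/
theorem stmt_10 (θ Emax D : ℝ) (hθ : 0 ≤ θ) (hEmax : 0 ≤ Emax) (hD : 0 < D)
    (B e d E : ℕ → ℝ) (hB0 : B 0 = 0)
    (hE : ∀ t, 0 ≤ E t ∧ E t ≤ Emax)
    (he1 : ∀ t, B t ≤ θ → e t = E t)
    (he2 : ∀ t, θ < B t → e t = 0)
    (hd : ∀ t, 0 ≤ d t ∧ d t ≤ D)
    (hd0 : ∀ t, B t < D → d t = 0)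
    (hdyn : ∀ t, B (t + 1) = B t - d t + e t) :
    ∀ t, 0 ≤ B t ∧ B t ≤ θ + Emax := by
  intro t
  induction t with
  | zero => simp [hB0]; positivity
  | succ t ih =>
    obtain ⟨h0, h1⟩ := ih
    have hE0 := (hE t).1
    have hE1 := (hE t).2
    have he_nn : 0 ≤ e t := by
      rcases le_or_gt (B t) θ with h | h
      · rw [he1 t h]; exact hE0
      · rw [he2 t h]
    constructor
    · rw [hdyn t]
      rcases lt_or_ge (B t) D with h | h
      · rw [hd0 t h]; linarith
      · have := (hd t).2; linarith
    · rw [hdyn t]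
      rcases le_or_gt (B t) θ with h | h
      · rw [he1 t h]; have := (hd t).1; linarith
      · rw [he2 t h]; have := (hd t).1; linarith
end
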